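/- Let v₁, v₂ ∈ ℝ³ be non-parallel spacelike vectors, and for i = 1, 2 let vᵢ⁺, vᵢ⁻ be future-pointing null vectors orthogonal to vᵢ spanning the two null directions of vᵢ^⊥. Assume v₁, v₂ are consistently oriented: ⟨v₁, v₂⟩ < 0, and ⟨vᵢ, v_j^±⟩ ≤ 0 for i ≠ j. Assume further that v₁⁻ = v₂⁺, and let pᵢ = aᵢ·vᵢ⁻ − bᵢ·vᵢ⁺ with aᵢ, bᵢ > 0 for i = 1, 2. Then the crooked planes C(v₁, p₁) and C(v₂, p₂) are disjoint. -/

import Mathlib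

/-- The Minkowski bilinear form on ℝ³: ⟨x,y⟩ = x₁y₁ + x₂y₂ − x₃y₃. -/
def minkowski (x y : Fin 3 → ℝ) : ℝ := x 0 * y 0 + x 1 * y 1 - x 2 * y 2

/-- The crooked plane with vertex `p`, director `v` and future-pointing null
vectors `vp = v⁺`, `vm = v⁻`: the union of the stem
`p + {x : ⟨x,v⟩ = 0, ⟨x,x⟩ ≤ 0}` and the wings `p + ℝ·v⁺ + [0,∞)·v` and
`p + ℝ·v⁻ + (−∞,0]·v`. -/
def crookedPlane (v vp vm p : Fin 3 → ℝ) : Set (Fin 3 → ℝ) :=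
  {q | minkowski (q - p) v = 0 ∧ minkowski (q - p) (q - p) ≤ 0} ∪
  {q | ∃ s t : ℝ, 0 ≤ t ∧ q = p + s • vp + t • v} ∪
  {q | ∃ s t : ℝ, t ≤ 0 ∧ q = p + s • vm + t • v}

/-! ### Bilinearity lemmas -/

lemma mink_comm (x y : Fin 3 → ℝ) : minkowski x y = minkowski y x := by
  simp only [minkowski]; ring

lemma mink_add_left (x y z : Fin 3 → ℝ) :
    minkowski (x + y) z = minkowski x z + minkowski y z := by
  simp only [minkowski, Pi.add_apply]; ring

lemma mink_sub_left (x y z : Fin 3 → ℝ) :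
    minkowski (x - y) z = minkowski x z - minkowski y z := by
  simp only [minkowski, Pi.sub_apply]; ring

lemma mink_smul_left (c : ℝ) (x y : Fin 3 → ℝ) :
    minkowski (c • x) y = c * minkowski x y := by
  simp only [minkowski, Pi.smul_apply, smul_eq_mul]; ring

lemma mink_add_right (x y z : Fin 3 → ℝ) :
    minkowski x (y + z) = minkowski x y + minkowski x z := by
  simp only [minkowski, Pi.add_apply]; ring

lemma mink_smul_right (c : ℝ) (x y : Fin 3 → ℝ) :
    minkowski x (c • y) = c * minkowski x y := by
  simp only [minkowski, Pi.smul_apply, smul_eq_mul]; ring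

/-! ### Null-vector lemmas -/

lemma null_pair_nonpos (x y : Fin 3 → ℝ) (hx : minkowski x x = 0)
    (hy : minkowski y y = 0) (hx2 : 0 < x 2) (hy2 : 0 < y 2) :
    minkowski x y ≤ 0 := by
  unfold minkowski at hx hy ⊢
  have key : (x 0 * y 0 + x 1 * y 1) ^ 2 + (x 0 * y 1 - x 1 * y 0) ^ 2
      = (x 2 * y 2) ^ 2 := by
    linear_combination (y 0 ^ 2 + y 1 ^ 2) * hx + x 2 ^ 2 * hy
  nlinarith [key, sq_nonneg (x 0 * y 1 - x 1 * y 0), mul_pos hx2 hy2]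

lemma null_pair_eq (x y : Fin 3 → ℝ) (hx : minkowski x x = 0)
    (hy : minkowski y y = 0) (hx2 : 0 < x 2) (hy2 : 0 < y 2)
    (hxy : minkowski x y = 0) : ∃ c : ℝ, x = c • y := by
  unfold minkowski at hx hy hxy
  have hy2' : y 2 ≠ 0 := ne_of_gt hy2
  have hx2' : x 2 ≠ 0 := ne_of_gt hx2
  have hL2 : (x 0 * y 1 - x 1 * y 0) ^ 2 = 0 := by
    linear_combination (y 0 ^ 2 + y 1 ^ 2) * hx + x 2 ^ 2 * hy
      - (x 0 * y 0 + x 1 * y 1 + x 2 * y 2) * hxy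
  have hL : x 0 * y 1 - x 1 * y 0 = 0 := by
    have := sq_eq_zero_iff.mp hL2
    linarith [this]
  have h02 : x 2 * (x 0 * y 2 - x 2 * y 0) = 0 := by
    linear_combination (-(x 0)) * hxy + x 1 * hL + y 0 * hx
  have h12 : x 2 * (x 1 * y 2 - x 2 * y 1) = 0 := by
    linear_combination (-(x 1)) * hxy + (-(x 0)) * hL + y 1 * hx
  have e0 : x 0 * y 2 = x 2 * y 0 := by
    rcases mul_eq_zero.mp h02 with h | h
    · exact absurd h hx2'
    · linarith
  have e1 : x 1 * y 2 = x 2 * y 1 := by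
    rcases mul_eq_zero.mp h12 with h | h
    · exact absurd h hx2'
    · linarith
  refine ⟨x 2 / y 2, funext fun i => ?_⟩
  simp only [Pi.smul_apply, smul_eq_mul]
  fin_cases i
  · field_simp
    exact e0
  · field_simp
    exact e1
  · show x 2 = x 2 / y 2 * y 2
    field_simp

/-! ### Orthogonality / basis lemmas -/

lemma perp_triple (u w v y : Fin 3 → ℝ) (hu : minkowski u u = 0)
    (hw : minkowski w w = 0) (hP : minkowski u w ≠ 0)
    (hv : 0 < minkowski v v) (hvu : minkowski v u = 0)
    (hvw : minkowski v w = 0) (h1 : minkowski y u = 0)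
    (h2 : minkowski y w = 0) (h3 : minkowski y v = 0) : y = 0 := by
  unfold minkowski at hu hw hP hv hvu hvw h1 h2 h3
  have hP2 : 0 < (u 0 * w 0 + u 1 * w 1 - u 2 * w 2) ^ 2 := by
    rcases hP.lt_or_gt with h | h <;> nlinarith
  have hD2 : (u 0 * (w 1 * v 2 - w 2 * v 1) - u 1 * (w 0 * v 2 - w 2 * v 0)
        + u 2 * (w 0 * v 1 - w 1 * v 0)) ^ 2
      = (u 0 * w 0 + u 1 * w 1 - u 2 * w 2) ^ 2
        * (v 0 * v 0 + v 1 * v 1 - v 2 * v 2) := by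
    linear_combination
      ((w 0 * v 0 + w 1 * v 1 - w 2 * v 2) ^ 2
        - (w 0 * w 0 + w 1 * w 1 - w 2 * w 2)
          * (v 0 * v 0 + v 1 * v 1 - v 2 * v 2)) * hu
      + ((w 0 * w 0 + w 1 * w 1 - w 2 * w 2)
          * (v 0 * u 0 + v 1 * u 1 - v 2 * u 2)
        - 2 * (u 0 * w 0 + u 1 * w 1 - u 2 * w 2)
          * (w 0 * v 0 + w 1 * v 1 - w 2 * v 2)) * hvu
  have hDne : (u 0 * (w 1 * v 2 - w 2 * v 1) - u 1 * (w 0 * v 2 - w 2 * v 0)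
      + u 2 * (w 0 * v 1 - w 1 * v 0)) ≠ 0 := by
    intro h
    rw [h] at hD2
    nlinarith [mul_pos hP2 hv]
  have e0 : (u 0 * (w 1 * v 2 - w 2 * v 1) - u 1 * (w 0 * v 2 - w 2 * v 0)
      + u 2 * (w 0 * v 1 - w 1 * v 0)) * y 0 = 0 := by
    linear_combination (w 1 * v 2 - w 2 * v 1) * h1 + (u 2 * v 1 - u 1 * v 2) * h2
      + (u 1 * w 2 - u 2 * w 1) * h3
  have e1 : (u 0 * (w 1 * v 2 - w 2 * v 1) - u 1 * (w 0 * v 2 - w 2 * v 0)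
      + u 2 * (w 0 * v 1 - w 1 * v 0)) * y 1 = 0 := by
    linear_combination (w 2 * v 0 - w 0 * v 2) * h1 + (u 0 * v 2 - u 2 * v 0) * h2
      + (u 2 * w 0 - u 0 * w 2) * h3
  have e2 : (u 0 * (w 1 * v 2 - w 2 * v 1) - u 1 * (w 0 * v 2 - w 2 * v 0)
      + u 2 * (w 0 * v 1 - w 1 * v 0)) * y 2 = 0 := by
    linear_combination (w 1 * v 0 - w 0 * v 1) * h1 + (u 0 * v 1 - u 1 * v 0) * h2
      + (u 1 * w 0 - u 0 * w 1) * h3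
  have hy0 : y 0 = 0 := by
    rcases mul_eq_zero.mp e0 with h | h
    · exact absurd h hDne
    · exact h
  have hy1 : y 1 = 0 := by
    rcases mul_eq_zero.mp e1 with h | h
    · exact absurd h hDne
    · exact h
  have hy2 : y 2 = 0 := by
    rcases mul_eq_zero.mp e2 with h | h
    · exact absurd h hDne
    · exact h
  funext i
  fin_cases i
  · simpa using hy0
  · simpa using hy1
  · simpa using hy2

lemma stem_decomp (u w v x : Fin 3 → ℝ) (hu : minkowski u u = 0)
    (hw : minkowski w w = 0) (hP : minkowski u w ≠ 0)
    (hv : 0 < minkowski v v) (hvu : minkowski v u = 0)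
    (hvw : minkowski v w = 0) (hxv : minkowski x v = 0) :
    ∃ α β : ℝ, x = α • u + β • w
      ∧ minkowski x x = 2 * α * β * minkowski u w := by
  have h1 : minkowski (x - ((minkowski x w / minkowski u w) • u
      + (minkowski x u / minkowski u w) • w)) u = 0 := by
    simp only [mink_sub_left, mink_add_left, mink_smul_left, hu, mink_comm w u]
    field_simp
    ring
  have h2 : minkowski (x - ((minkowski x w / minkowski u w) • u
      + (minkowski x u / minkowski u w) • w)) w = 0 := by
    simp only [mink_sub_left, mink_add_left, mink_smul_left, hw]
    field_simp
    ring
  have h3 : minkowski (x - ((minkowski x w / minkowski u w) • u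
      + (minkowski x u / minkowski u w) • w)) v = 0 := by
    simp only [mink_sub_left, mink_add_left, mink_smul_left,
      mink_comm u v, mink_comm w v, hvu, hvw, hxv]
    ring
  have h0 := perp_triple u w v _ hu hw hP hv hvu hvw h1 h2 h3
  have hdec : x = (minkowski x w / minkowski u w) • u
      + (minkowski x u / minkowski u w) • w := sub_eq_zero.mp h0
  refine ⟨minkowski x w / minkowski u w, minkowski x u / minkowski u w,
    hdec, ?_⟩
  nth_rewrite 1 [hdec]
  nth_rewrite 1 [hdec]
  simp only [mink_add_left, mink_smul_left, mink_add_right, mink_smul_right,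
    hu, hw, mink_comm w u, mink_comm u x, mink_comm w x]
  field_simp
  ring

/-! ### Sign helpers -/

lemma nn_of_np_np {a b : ℝ} (ha : a ≤ 0) (hb : b ≤ 0) : 0 ≤ a * b := by
  nlinarith

lemma np_of_nn_np {a b : ℝ} (ha : 0 ≤ a) (hb : b ≤ 0) : a * b ≤ 0 := by
  nlinarith

lemma np_of_np_nn {a b : ℝ} (ha : a ≤ 0) (hb : 0 ≤ b) : a * b ≤ 0 := by
  nlinarith

/-! ### The nine scalar cases -/

section Cases

variable {P Q R e₁ e₂ a₁ b₁ a₂ b₂ : ℝ}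

lemma caseSS (hP : P < 0) (hQ : Q < 0) (hR : R < 0)
    (hd₁ : e₁ ≤ 0) (hd₂ : e₂ ≤ 0)
    (ha₁ : 0 < a₁) (hb₁ : 0 < b₁) (ha₂ : 0 < a₂) (hb₂ : 0 < b₂)
    (α β β' γ : ℝ) (hc₁ : 0 ≤ α * β) (hc₂ : 0 ≤ β' * γ)
    (E1 : a₁ * P + β * P = a₂ * R - b₂ * P + β' * P + γ * R)
    (E2 : a₁ * Q - b₁ * R + α * R + β * Q = -(b₂ * Q) + β' * Q)
    (E3 : -(b₁ * P) + α * P = a₂ * Q + γ * Q) : False := by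
  have hQR : 0 < Q * R := mul_pos_of_neg_of_neg hQ hR
  have k1 : Q * R * (a₂ + γ) = 0 := by
    linear_combination (P * E2 - Q * E1 - R * E3) / 2
  have hγ : a₂ + γ = 0 := by
    rcases mul_eq_zero.mp k1 with h | h
    · exact absurd h hQR.ne'
    · exact h
  have hα : α = b₁ := by
    have h : P * (α - b₁) = 0 := by linear_combination E3 + Q * hγ
    rcases mul_eq_zero.mp h with h' | h'
    · exact absurd h' hP.ne
    · linarith
  have hβ : β = β' - a₁ - b₂ := by
    have h : P * (β - (β' - a₁ - b₂)) = 0 := by linear_combination E1 + R * hγ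
    rcases mul_eq_zero.mp h with h' | h'
    · exact absurd h' hP.ne
    · linarith
  have hβ' : β' ≤ 0 := by nlinarith [hc₂]
  rw [hα, hβ] at hc₁
  nlinarith [hc₁]

lemma caseSW2p (hP : P < 0) (hQ : Q < 0) (hR : R < 0)
    (hd₁ : e₁ ≤ 0) (hd₂ : e₂ ≤ 0)
    (ha₁ : 0 < a₁) (hb₁ : 0 < b₁) (ha₂ : 0 < a₂) (hb₂ : 0 < b₂)
    (α β σ τ : ℝ) (hc₁ : 0 ≤ α * β) (hτ : 0 ≤ τ)
    (E1 : a₁ * P + β * P = a₂ * R - b₂ * P + σ * P + τ * e₂)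
    (E2 : a₁ * Q - b₁ * R + α * R + β * Q = -(b₂ * Q) + σ * Q)
    (E3 : -(b₁ * P) + α * P = a₂ * Q) : False := by
  have k : 2 * a₂ * (Q * R) + Q * (τ * e₂) = 0 := by
    linear_combination P * E2 - Q * E1 - R * E3
  have h1 : 0 < a₂ * (Q * R) := mul_pos ha₂ (mul_pos_of_neg_of_neg hQ hR)
  have h2 : 0 ≤ Q * (τ * e₂) := nn_of_np_np hQ.le (np_of_nn_np hτ hd₂)
  nlinarith [k, h1, h2]

lemma caseSW2m (hP : P < 0) (hQ : Q < 0) (hR : R < 0)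
    (hd₁ : e₁ ≤ 0) (hd₂ : e₂ ≤ 0)
    (ha₁ : 0 < a₁) (hb₁ : 0 < b₁) (ha₂ : 0 < a₂) (hb₂ : 0 < b₂)
    (α β σ τ : ℝ) (hc₁ : 0 ≤ α * β) (hτ : τ ≤ 0)
    (E1 : a₁ * P + β * P = a₂ * R - b₂ * P + σ * R + τ * e₂)
    (E2 : a₁ * Q - b₁ * R + α * R + β * Q = -(b₂ * Q))
    (E3 : -(b₁ * P) + α * P = a₂ * Q + σ * Q) : False := by
  have hQτ : Q * (τ * e₂) ≤ 0 := np_of_np_nn hQ.le (nn_of_np_np hτ hd₂)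
  have k1 : 2 * (P * R) * (α - b₁) + Q * (τ * e₂) = 0 := by
    linear_combination P * E2 - Q * E1 + R * E3
  have hPR : 0 < P * R := mul_pos_of_neg_of_neg hP hR
  have hα : b₁ ≤ α := by nlinarith [k1, hPR, hQτ]
  have hαpos : 0 < α := lt_of_lt_of_le hb₁ hα
  have hβ : 0 ≤ β := by nlinarith [hc₁, hαpos]
  have k2 : 2 * (P * Q) * (a₁ + β + b₂) - Q * (τ * e₂) = 0 := by
    linear_combination P * E2 + Q * E1 - R * E3
  have hPQ : 0 < P * Q := mul_pos_of_neg_of_neg hP hQ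
  have hpos : 0 < a₁ + β + b₂ := by linarith
  nlinarith [k2, mul_pos hPQ hpos, hQτ]

lemma caseW1pS2 (hP : P < 0) (hQ : Q < 0) (hR : R < 0)
    (hd₁ : e₁ ≤ 0) (hd₂ : e₂ ≤ 0)
    (ha₁ : 0 < a₁) (hb₁ : 0 < b₁) (ha₂ : 0 < a₂) (hb₂ : 0 < b₂)
    (s t β' γ : ℝ) (ht : 0 ≤ t) (hc₂ : 0 ≤ β' * γ)
    (E1 : a₁ * P = a₂ * R - b₂ * P + β' * P + γ * R)
    (E2 : a₁ * Q - b₁ * R + s * R + t * e₁ = -(b₂ * Q) + β' * Q)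
    (E3 : -(b₁ * P) + s * P = a₂ * Q + γ * Q) : False := by
  have k1 : P * (t * e₁) + 2 * (Q * R) * (a₂ + γ) = 0 := by
    linear_combination P * E2 - Q * E1 - R * E3
  have hPt : 0 ≤ P * (t * e₁) := nn_of_np_np hP.le (np_of_nn_np ht hd₁)
  have hQR : 0 < Q * R := mul_pos_of_neg_of_neg hQ hR
  have hγ : a₂ + γ ≤ 0 := by nlinarith [k1, hPt, hQR]
  have hγneg : γ < 0 := by linarith
  have hβ' : β' ≤ 0 := by nlinarith [hc₂, hγneg]
  have k2 : P * (a₁ + b₂ - β') - R * (a₂ + γ) = 0 := by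
    linear_combination E1
  have hpos : 0 < a₁ + b₂ - β' := by linarith
  nlinarith [k2, nn_of_np_np hR.le hγ, mul_neg_of_neg_of_pos hP hpos]

lemma caseW1pW2p (hP : P < 0) (hQ : Q < 0) (hR : R < 0)
    (hd₁ : e₁ ≤ 0) (hd₂ : e₂ ≤ 0)
    (ha₁ : 0 < a₁) (hb₁ : 0 < b₁) (ha₂ : 0 < a₂) (hb₂ : 0 < b₂)
    (s t σ τ : ℝ) (ht : 0 ≤ t) (hτ : 0 ≤ τ)
    (E1 : a₁ * P = a₂ * R - b₂ * P + σ * P + τ * e₂)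
    (E2 : a₁ * Q - b₁ * R + s * R + t * e₁ = -(b₂ * Q) + σ * Q)
    (E3 : -(b₁ * P) + s * P = a₂ * Q) : False := by
  have k : P * (t * e₁) + 2 * a₂ * (Q * R) + Q * (τ * e₂) = 0 := by
    linear_combination P * E2 - Q * E1 - R * E3
  have h1 : 0 ≤ P * (t * e₁) := nn_of_np_np hP.le (np_of_nn_np ht hd₁)
  have h2 : 0 < a₂ * (Q * R) := mul_pos ha₂ (mul_pos_of_neg_of_neg hQ hR)
  have h3 : 0 ≤ Q * (τ * e₂) := nn_of_np_np hQ.le (np_of_nn_np hτ hd₂)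
  nlinarith [k, h1, h2, h3]

lemma caseW1pW2m (hP : P < 0) (hQ : Q < 0) (hR : R < 0)
    (hd₁ : e₁ ≤ 0) (hd₂ : e₂ ≤ 0)
    (ha₁ : 0 < a₁) (hb₁ : 0 < b₁) (ha₂ : 0 < a₂) (hb₂ : 0 < b₂)
    (s t σ τ : ℝ) (ht : 0 ≤ t) (hτ : τ ≤ 0)
    (E1 : a₁ * P = a₂ * R - b₂ * P + σ * R + τ * e₂)
    (E2 : a₁ * Q - b₁ * R + s * R + t * e₁ = -(b₂ * Q))
    (E3 : -(b₁ * P) + s * P = a₂ * Q + σ * Q) : False := by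
  have k : 2 * (P * Q) * (a₁ + b₂) + P * (t * e₁) - Q * (τ * e₂) = 0 := by
    linear_combination P * E2 + Q * E1 - R * E3
  have hPQ : 0 < P * Q := mul_pos_of_neg_of_neg hP hQ
  have hpos : 0 < a₁ + b₂ := by linarith
  have h1 : 0 ≤ P * (t * e₁) := nn_of_np_np hP.le (np_of_nn_np ht hd₁)
  have h2 : Q * (τ * e₂) ≤ 0 := np_of_np_nn hQ.le (nn_of_np_np hτ hd₂)
  nlinarith [k, mul_pos hPQ hpos, h1, h2]

lemma caseW1mS2 (hP : P < 0) (hQ : Q < 0) (hR : R < 0)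
    (hd₁ : e₁ ≤ 0) (hd₂ : e₂ ≤ 0)
    (ha₁ : 0 < a₁) (hb₁ : 0 < b₁) (ha₂ : 0 < a₂) (hb₂ : 0 < b₂)
    (s t β' γ : ℝ) (ht : t ≤ 0) (hc₂ : 0 ≤ β' * γ)
    (E1 : a₁ * P + s * P = a₂ * R - b₂ * P + β' * P + γ * R)
    (E2 : a₁ * Q - b₁ * R + s * Q + t * e₁ = -(b₂ * Q) + β' * Q)
    (E3 : -(b₁ * P) = a₂ * Q + γ * Q) : False := by
  have k : P * (t * e₁) - 2 * (P * R) * b₁ = 0 := by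
    linear_combination P * E2 - Q * E1 + R * E3
  have h1 : P * (t * e₁) ≤ 0 := np_of_np_nn hP.le (nn_of_np_np ht hd₁)
  have h2 : 0 < (P * R) * b₁ := mul_pos (mul_pos_of_neg_of_neg hP hR) hb₁
  nlinarith [k, h1, h2]

lemma caseW1mW2p (hP : P < 0) (hQ : Q < 0) (hR : R < 0)
    (hd₁ : e₁ ≤ 0) (hd₂ : e₂ ≤ 0)
    (ha₁ : 0 < a₁) (hb₁ : 0 < b₁) (ha₂ : 0 < a₂) (hb₂ : 0 < b₂)
    (s t σ τ : ℝ) (ht : t ≤ 0) (hτ : 0 ≤ τ)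
    (E1 : a₁ * P + s * P = a₂ * R - b₂ * P + σ * P + τ * e₂)
    (E2 : a₁ * Q - b₁ * R + s * Q + t * e₁ = -(b₂ * Q) + σ * Q)
    (E3 : -(b₁ * P) = a₂ * Q) : False := by
  have h1 : b₁ * P < 0 := mul_neg_of_pos_of_neg hb₁ hP
  have h2 : a₂ * Q < 0 := mul_neg_of_pos_of_neg ha₂ hQ
  linarith [E3, h1, h2]

lemma caseW1mW2m (hP : P < 0) (hQ : Q < 0) (hR : R < 0)
    (hd₁ : e₁ ≤ 0) (hd₂ : e₂ ≤ 0)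
    (ha₁ : 0 < a₁) (hb₁ : 0 < b₁) (ha₂ : 0 < a₂) (hb₂ : 0 < b₂)
    (s t σ τ : ℝ) (ht : t ≤ 0) (hτ : τ ≤ 0)
    (E1 : a₁ * P + s * P = a₂ * R - b₂ * P + σ * R + τ * e₂)
    (E2 : a₁ * Q - b₁ * R + s * Q + t * e₁ = -(b₂ * Q))
    (E3 : -(b₁ * P) = a₂ * Q + σ * Q) : False := by
  have k : P * (t * e₁) + Q * (τ * e₂) - 2 * (P * R) * b₁ = 0 := by
    linear_combination P * E2 - Q * E1 + R * E3
  have h1 : P * (t * e₁) ≤ 0 := np_of_np_nn hP.le (nn_of_np_np ht hd₁)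
  have h2 : Q * (τ * e₂) ≤ 0 := np_of_np_nn hQ.le (nn_of_np_np hτ hd₂)
  have h3 : 0 < (P * R) * b₁ := mul_pos (mul_pos_of_neg_of_neg hP hR) hb₁
  nlinarith [k, h1, h2, h3]

end Cases

set_option maxHeartbeats 2000000 in
/-- Disjointness criterion for crooked planes directed by consistently
oriented spacelike vectors `v₁, v₂` with `v₁⁻ = v₂⁺`, whose vertices are
suitably placed in the quadrants `aᵢ·vᵢ⁻ − bᵢ·vᵢ⁺` with `aᵢ, bᵢ > 0`. -/
theorem crooked_planes_disjoint
    (v₁ v₂ v₁p v₁m v₂p v₂m p₁ p₂ : Fin 3 → ℝ)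
    (hs₁ : 0 < minkowski v₁ v₁) (hs₂ : 0 < minkowski v₂ v₂)
    (hpar : ¬ ∃ c : ℝ, v₂ = c • v₁)
    (h₁p_null : minkowski v₁p v₁p = 0) (h₁p_fut : 0 < v₁p 2)
    (h₁p_orth : minkowski v₁ v₁p = 0)
    (h₁m_null : minkowski v₁m v₁m = 0) (h₁m_fut : 0 < v₁m 2)
    (h₁m_orth : minkowski v₁ v₁m = 0)
    (h₁span : ¬ ∃ c : ℝ, v₁p = c • v₁m)
    (h₂p_null : minkowski v₂p v₂p = 0) (h₂p_fut : 0 < v₂p 2)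
    (h₂p_orth : minkowski v₂ v₂p = 0)
    (h₂m_null : minkowski v₂m v₂m = 0) (h₂m_fut : 0 < v₂m 2)
    (h₂m_orth : minkowski v₂ v₂m = 0)
    (h₂span : ¬ ∃ c : ℝ, v₂p = c • v₂m)
    (hco : minkowski v₁ v₂ < 0)
    (hco₁₂p : minkowski v₁ v₂p ≤ 0) (hco₁₂m : minkowski v₁ v₂m ≤ 0)
    (hco₂₁p : minkowski v₂ v₁p ≤ 0) (hco₂₁m : minkowski v₂ v₁m ≤ 0)
    (hshare : v₁m = v₂p)
    (a₁ b₁ a₂ b₂ : ℝ) (ha₁ : 0 < a₁) (hb₁ : 0 < b₁) (ha₂ : 0 < a₂) (hb₂ : 0 < b₂)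
    (hp₁ : p₁ = a₁ • v₁m - b₁ • v₁p)
    (hp₂ : p₂ = a₂ • v₂m - b₂ • v₂p) :
    Disjoint (crookedPlane v₁ v₁p v₁m p₁) (crookedPlane v₂ v₂p v₂m p₂) := by
  subst hshare
  subst hp₁
  subst hp₂
  -- symmetric forms of the pairings
  have hsym1 : minkowski v₁m v₁p = minkowski v₁p v₁m := mink_comm _ _
  have hsym2 : minkowski v₂m v₁m = minkowski v₁m v₂m := mink_comm _ _
  have hsym3 : minkowski v₂m v₁p = minkowski v₁p v₂m := mink_comm _ _
  -- the three pairings of the null vectors are negative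
  have hP : minkowski v₁p v₁m < 0 :=
    lt_of_le_of_ne
      (null_pair_nonpos _ _ h₁p_null h₁m_null h₁p_fut h₁m_fut)
      (fun h => h₁span (null_pair_eq _ _ h₁p_null h₁m_null h₁p_fut h₁m_fut h))
  have hQ : minkowski v₁m v₂m < 0 :=
    lt_of_le_of_ne
      (null_pair_nonpos _ _ h₁m_null h₂m_null h₁m_fut h₂m_fut)
      (fun h => h₂span (null_pair_eq _ _ h₁m_null h₂m_null h₁m_fut h₂m_fut h))
  have hR : minkowski v₁p v₂m < 0 := by
    refine lt_of_le_of_ne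
      (null_pair_nonpos _ _ h₁p_null h₂m_null h₁p_fut h₂m_fut) ?_
    intro h
    obtain ⟨c, hc⟩ := null_pair_eq _ _ h₁p_null h₂m_null h₁p_fut h₂m_fut h
    have hv2u : minkowski v₂ v₁p = 0 := by
      rw [hc, mink_smul_right, h₂m_orth, mul_zero]
    have h1 : minkowski (minkowski v₁ v₁ • v₂ - minkowski v₁ v₂ • v₁) v₁p = 0 := by
      simp only [mink_sub_left, mink_smul_left, hv2u, h₁p_orth]
      ring
    have h2 : minkowski (minkowski v₁ v₁ • v₂ - minkowski v₁ v₂ • v₁) v₁m = 0 := by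
      simp only [mink_sub_left, mink_smul_left, h₂p_orth, h₁m_orth]
      ring
    have h3 : minkowski (minkowski v₁ v₁ • v₂ - minkowski v₁ v₂ • v₁) v₁ = 0 := by
      simp only [mink_sub_left, mink_smul_left, mink_comm v₂ v₁]
      ring
    have h0 := perp_triple v₁p v₁m v₁ _ h₁p_null h₁m_null hP.ne hs₁
      h₁p_orth h₁m_orth h1 h2 h3
    refine hpar ⟨minkowski v₁ v₂ / minkowski v₁ v₁, funext fun i => ?_⟩
    have hcf := congrFun h0 i
    simp only [Pi.sub_apply, Pi.smul_apply, smul_eq_mul, Pi.zero_apply] at hcf ⊢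
    field_simp
    linarith [hcf]
  rw [Set.disjoint_left]
  intro q hq1 hq2
  simp only [crookedPlane, Set.mem_union, Set.mem_setOf_eq] at hq1 hq2
  -- normalize each membership to the form q = (vertex) + s • e + t • e'
  rcases hq1 with (⟨hA1, hB1⟩ | ⟨s, t, ht, hq1e⟩) | ⟨s, t, ht, hq1e⟩ <;>
    rcases hq2 with (⟨hA2, hB2⟩ | ⟨σ, τ, hτ, hq2e⟩) | ⟨σ, τ, hτ, hq2e⟩
  -- Case S1, S2
  · obtain ⟨α, β, hdec1, hnorm1⟩ := stem_decomp v₁p v₁m v₁ _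
      h₁p_null h₁m_null hP.ne hs₁ h₁p_orth h₁m_orth hA1
    obtain ⟨β', γ, hdec2, hnorm2⟩ := stem_decomp v₁m v₂m v₂ _
      h₁m_null h₂m_null hQ.ne hs₂ h₂p_orth h₂m_orth hA2
    have hc₁ : 0 ≤ α * β := by
      have h2 : 2 * α * β * minkowski v₁p v₁m ≤ 0 := hnorm1 ▸ hB1
      nlinarith [h2, hP]
    have hc₂ : 0 ≤ β' * γ := by
      have h2 : 2 * β' * γ * minkowski v₁m v₂m ≤ 0 := hnorm2 ▸ hB2
      nlinarith [h2, hQ]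
    have hq1e : q = α • v₁p + β • v₁m + (a₁ • v₁m - b₁ • v₁p) :=
      sub_eq_iff_eq_add.mp hdec1
    have hq2e : q = β' • v₁m + γ • v₂m + (a₂ • v₂m - b₂ • v₁m) :=
      sub_eq_iff_eq_add.mp hdec2
    have hvec := hq1e.symm.trans hq2e
    have E1 := congrArg (fun r => minkowski r v₁p) hvec
    have E2 := congrArg (fun r => minkowski r v₂m) hvec
    have E3 := congrArg (fun r => minkowski r v₁m) hvec
    simp only [mink_add_left, mink_sub_left, mink_smul_left, h₁p_null,
      h₁m_null, h₂m_null, h₁p_orth, h₁m_orth, h₂p_orth, h₂m_orth,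
      hsym1, hsym2, hsym3] at E1 E2 E3
    exact caseSS hP hQ hR hco₁₂m hco₂₁p ha₁ hb₁ ha₂ hb₂ α β β' γ hc₁ hc₂
      (by linear_combination E1) (by linear_combination E2)
      (by linear_combination E3)
  -- Case S1, W2p
  · obtain ⟨α, β, hdec1, hnorm1⟩ := stem_decomp v₁p v₁m v₁ _
      h₁p_null h₁m_null hP.ne hs₁ h₁p_orth h₁m_orth hA1
    have hc₁ : 0 ≤ α * β := by
      have h2 : 2 * α * β * minkowski v₁p v₁m ≤ 0 := hnorm1 ▸ hB1
      nlinarith [h2, hP]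
    have hq1e : q = α • v₁p + β • v₁m + (a₁ • v₁m - b₁ • v₁p) :=
      sub_eq_iff_eq_add.mp hdec1
    have hvec := hq1e.symm.trans hq2e
    have E1 := congrArg (fun r => minkowski r v₁p) hvec
    have E2 := congrArg (fun r => minkowski r v₂m) hvec
    have E3 := congrArg (fun r => minkowski r v₁m) hvec
    simp only [mink_add_left, mink_sub_left, mink_smul_left, h₁p_null,
      h₁m_null, h₂m_null, h₁p_orth, h₁m_orth, h₂p_orth, h₂m_orth,
      hsym1, hsym2, hsym3] at E1 E2 E3
    exact caseSW2p hP hQ hR hco₁₂m hco₂₁p ha₁ hb₁ ha₂ hb₂ α β σ τ hc₁ hτ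
      (by linear_combination E1) (by linear_combination E2)
      (by linear_combination E3)
  -- Case S1, W2m
  · obtain ⟨α, β, hdec1, hnorm1⟩ := stem_decomp v₁p v₁m v₁ _
      h₁p_null h₁m_null hP.ne hs₁ h₁p_orth h₁m_orth hA1
    have hc₁ : 0 ≤ α * β := by
      have h2 : 2 * α * β * minkowski v₁p v₁m ≤ 0 := hnorm1 ▸ hB1
      nlinarith [h2, hP]
    have hq1e : q = α • v₁p + β • v₁m + (a₁ • v₁m - b₁ • v₁p) :=
      sub_eq_iff_eq_add.mp hdec1
    have hvec := hq1e.symm.trans hq2e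
    have E1 := congrArg (fun r => minkowski r v₁p) hvec
    have E2 := congrArg (fun r => minkowski r v₂m) hvec
    have E3 := congrArg (fun r => minkowski r v₁m) hvec
    simp only [mink_add_left, mink_sub_left, mink_smul_left, h₁p_null,
      h₁m_null, h₂m_null, h₁p_orth, h₁m_orth, h₂p_orth, h₂m_orth,
      hsym1, hsym2, hsym3] at E1 E2 E3
    exact caseSW2m hP hQ hR hco₁₂m hco₂₁p ha₁ hb₁ ha₂ hb₂ α β σ τ hc₁ hτ
      (by linear_combination E1) (by linear_combination E2)
      (by linear_combination E3)
  -- Case W1p, S2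
  · obtain ⟨β', γ, hdec2, hnorm2⟩ := stem_decomp v₁m v₂m v₂ _
      h₁m_null h₂m_null hQ.ne hs₂ h₂p_orth h₂m_orth hA2
    have hc₂ : 0 ≤ β' * γ := by
      have h2 : 2 * β' * γ * minkowski v₁m v₂m ≤ 0 := hnorm2 ▸ hB2
      nlinarith [h2, hQ]
    have hq2e : q = β' • v₁m + γ • v₂m + (a₂ • v₂m - b₂ • v₁m) :=
      sub_eq_iff_eq_add.mp hdec2
    have hvec := hq1e.symm.trans hq2e
    have E1 := congrArg (fun r => minkowski r v₁p) hvec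
    have E2 := congrArg (fun r => minkowski r v₂m) hvec
    have E3 := congrArg (fun r => minkowski r v₁m) hvec
    simp only [mink_add_left, mink_sub_left, mink_smul_left, h₁p_null,
      h₁m_null, h₂m_null, h₁p_orth, h₁m_orth, h₂p_orth, h₂m_orth,
      hsym1, hsym2, hsym3] at E1 E2 E3
    exact caseW1pS2 hP hQ hR hco₁₂m hco₂₁p ha₁ hb₁ ha₂ hb₂ s t β' γ ht hc₂
      (by linear_combination E1) (by linear_combination E2)
      (by linear_combination E3)
  -- Case W1p, W2p
  · have hvec := hq1e.symm.trans hq2e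
    have E1 := congrArg (fun r => minkowski r v₁p) hvec
    have E2 := congrArg (fun r => minkowski r v₂m) hvec
    have E3 := congrArg (fun r => minkowski r v₁m) hvec
    simp only [mink_add_left, mink_sub_left, mink_smul_left, h₁p_null,
      h₁m_null, h₂m_null, h₁p_orth, h₁m_orth, h₂p_orth, h₂m_orth,
      hsym1, hsym2, hsym3] at E1 E2 E3
    exact caseW1pW2p hP hQ hR hco₁₂m hco₂₁p ha₁ hb₁ ha₂ hb₂ s t σ τ ht hτ
      (by linear_combination E1) (by linear_combination E2)
      (by linear_combination E3)
  -- Case W1p, W2m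
  · have hvec := hq1e.symm.trans hq2e
    have E1 := congrArg (fun r => minkowski r v₁p) hvec
    have E2 := congrArg (fun r => minkowski r v₂m) hvec
    have E3 := congrArg (fun r => minkowski r v₁m) hvec
    simp only [mink_add_left, mink_sub_left, mink_smul_left, h₁p_null,
      h₁m_null, h₂m_null, h₁p_orth, h₁m_orth, h₂p_orth, h₂m_orth,
      hsym1, hsym2, hsym3] at E1 E2 E3
    exact caseW1pW2m hP hQ hR hco₁₂m hco₂₁p ha₁ hb₁ ha₂ hb₂ s t σ τ ht hτ
      (by linear_combination E1) (by linear_combination E2)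
      (by linear_combination E3)
  -- Case W1m, S2
  · obtain ⟨β', γ, hdec2, hnorm2⟩ := stem_decomp v₁m v₂m v₂ _
      h₁m_null h₂m_null hQ.ne hs₂ h₂p_orth h₂m_orth hA2
    have hc₂ : 0 ≤ β' * γ := by
      have h2 : 2 * β' * γ * minkowski v₁m v₂m ≤ 0 := hnorm2 ▸ hB2
      nlinarith [h2, hQ]
    have hq2e : q = β' • v₁m + γ • v₂m + (a₂ • v₂m - b₂ • v₁m) :=
      sub_eq_iff_eq_add.mp hdec2
    have hvec := hq1e.symm.trans hq2e
    have E1 := congrArg (fun r => minkowski r v₁p) hvec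
    have E2 := congrArg (fun r => minkowski r v₂m) hvec
    have E3 := congrArg (fun r => minkowski r v₁m) hvec
    simp only [mink_add_left, mink_sub_left, mink_smul_left, h₁p_null,
      h₁m_null, h₂m_null, h₁p_orth, h₁m_orth, h₂p_orth, h₂m_orth,
      hsym1, hsym2, hsym3] at E1 E2 E3
    exact caseW1mS2 hP hQ hR hco₁₂m hco₂₁p ha₁ hb₁ ha₂ hb₂ s t β' γ ht hc₂
      (by linear_combination E1) (by linear_combination E2)
      (by linear_combination E3)
  -- Case W1m, W2p
  · have hvec := hq1e.symm.trans hq2e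
    have E1 := congrArg (fun r => minkowski r v₁p) hvec
    have E2 := congrArg (fun r => minkowski r v₂m) hvec
    have E3 := congrArg (fun r => minkowski r v₁m) hvec
    simp only [mink_add_left, mink_sub_left, mink_smul_left, h₁p_null,
      h₁m_null, h₂m_null, h₁p_orth, h₁m_orth, h₂p_orth, h₂m_orth,
      hsym1, hsym2, hsym3] at E1 E2 E3
    exact caseW1mW2p hP hQ hR hco₁₂m hco₂₁p ha₁ hb₁ ha₂ hb₂ s t σ τ ht hτ
      (by linear_combination E1) (by linear_combination E2)
      (by linear_combination E3)
  -- Case W1m, W2m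
  · have hvec := hq1e.symm.trans hq2e
    have E1 := congrArg (fun r => minkowski r v₁p) hvec
    have E2 := congrArg (fun r => minkowski r v₂m) hvec
    have E3 := congrArg (fun r => minkowski r v₁m) hvec
    simp only [mink_add_left, mink_sub_left, mink_smul_left, h₁p_null,
      h₁m_null, h₂m_null, h₁p_orth, h₁m_orth, h₂p_orth, h₂m_orth,
      hsym1, hsym2, hsym3] at E1 E2 E3
    exact caseW1mW2m hP hQ hR hco₁₂m hco₂₁p ha₁ hb₁ ha₂ hb₂ s t σ τ ht hτ
      (by linear_combination E1) (by linear_combination E2)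
      (by linear_combination E3)
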